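/- Let g : [0,∞) → ℝ be defined by g(t) = min(C₀, C·h^{-n/2}·e^{-λt}) with C₀, C, λ > 0, h ∈ (0,1), n ≥ 1. Then for γ ≤ 0 with λ + γ > 0, ∫₀^{∞} e^{-γt} g(t) dt ≤ C₀·e^{-γ t*} ·(t* + 1/(λ+γ)) where t* = max(0, (1/λ)·log(C h^{-n/2}/C₀)) is the crossover time. Consequently, for h small, ∫₀^{∞} e^{-γt} g(t) dt ≤ C'·h^{(n/(2λ))γ}·log(1/h). -/

import Mathlib

open MeasureTheory Set Real

lemma exp_int_Ioi (b a : ℝ) (hb : 0 < b) :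
    ∫ t in Set.Ioi a, Real.exp (-b * t) = Real.exp (-b * a) / b := by
  have hderiv : ∀ x ∈ Set.Ici a, HasDerivAt (fun t => -Real.exp (-b * t) / b)
      (Real.exp (-b * x)) x := by
    intro x _
    have h1 : HasDerivAt (fun t : ℝ => -b * t) (-b) x := by
      simpa using (hasDerivAt_id x).const_mul (-b)
    have h2 := ((h1.exp).neg).div_const b
    refine h2.congr_deriv ?_
    field_simp
  have htend : Filter.Tendsto (fun t => -Real.exp (-b * t) / b) Filter.atTop (nhds 0) := by
    have h3 : Filter.Tendsto (fun t : ℝ => -b * t) Filter.atTop Filter.atBot := by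
      have h3a := Filter.Tendsto.const_mul_atTop hb (Filter.tendsto_id (α := ℝ))
      have h3b := Filter.tendsto_neg_atTop_atBot.comp h3a
      have heq : (fun t : ℝ => -b * t) = (Neg.neg ∘ fun x : ℝ => b * x) := by
        funext t; simp [Function.comp, neg_mul]
      rw [heq]; exact h3b
    have h4 := Real.tendsto_exp_atBot.comp h3
    have h5 := (h4.neg).div_const b
    simpa using h5
  have := integral_Ioi_of_hasDerivAt_of_tendsto' hderiv (exp_neg_integrableOn_Ioi a hb) htend
  rw [this]; ring

lemma key_bound (C₀ A lam γ T : ℝ) (hC₀ : 0 < C₀) (hA : 0 < A) (hγ : γ ≤ 0)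
    (hlg : 0 < lam + γ) (hT : 0 ≤ T) (hAT : A * Real.exp (-lam * T) ≤ C₀) :
    ∫ t in Set.Ioi (0 : ℝ), Real.exp (-γ * t) * min C₀ (A * Real.exp (-lam * t)) ≤
      C₀ * Real.exp (-γ * T) * (T + 1 / (lam + γ)) := by
  have hlam : 0 < lam := by linarith
  set f : ℝ → ℝ := fun t => Real.exp (-γ * t) * min C₀ (A * Real.exp (-lam * t)) with hf
  have hfc : Continuous f := by
    apply Continuous.mul
    · exact (continuous_const.mul continuous_id).rexp
    · exact continuous_const.min (continuous_const.mul ((continuous_const.mul continuous_id).rexp))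
  have hfnn : ∀ t : ℝ, 0 ≤ f t := fun t =>
    mul_nonneg (Real.exp_nonneg _) (le_min hC₀.le (mul_nonneg hA.le (Real.exp_nonneg _)))
  have hbound : ∀ t : ℝ, f t ≤ A * Real.exp (-(lam + γ) * t) := by
    intro t
    have h1 : min C₀ (A * Real.exp (-lam * t)) ≤ A * Real.exp (-lam * t) := min_le_right _ _
    calc f t ≤ Real.exp (-γ * t) * (A * Real.exp (-lam * t)) :=
          mul_le_mul_of_nonneg_left h1 (Real.exp_nonneg _)
      _ = A * Real.exp (-(lam + γ) * t) := by
          rw [show -(lam + γ) * t = -γ * t + -lam * t by ring, Real.exp_add]; ring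
  have hint0 : IntegrableOn (fun t => A * Real.exp (-(lam + γ) * t)) (Set.Ioi (0:ℝ)) :=
    (exp_neg_integrableOn_Ioi 0 hlg).const_mul A
  have hfint : IntegrableOn f (Set.Ioi (0:ℝ)) := by
    apply Integrable.mono' hint0 hfc.aestronglyMeasurable
    filter_upwards with t
    rw [Real.norm_eq_abs, abs_of_nonneg (hfnn t)]
    exact hbound t
  have hsplit : Set.Ioc (0:ℝ) T ∪ Set.Ioi T = Set.Ioi 0 := Set.Ioc_union_Ioi_eq_Ioi hT
  have hfint1 : IntegrableOn f (Set.Ioc (0:ℝ) T) := hfint.mono_set Set.Ioc_subset_Ioi_self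
  have hfint2 : IntegrableOn f (Set.Ioi T) := hfint.mono_set (Set.Ioi_subset_Ioi hT)
  have heq : ∫ t in Set.Ioi (0:ℝ), f t
      = (∫ t in Set.Ioc (0:ℝ) T, f t) + ∫ t in Set.Ioi T, f t := by
    rw [← hsplit, setIntegral_union (Set.Ioc_disjoint_Ioi le_rfl) measurableSet_Ioi hfint1 hfint2]
  have hI1 : ∫ t in Set.Ioc (0:ℝ) T, f t ≤ C₀ * Real.exp (-γ * T) * T := by
    have hmono : ∀ t ∈ Set.Ioc (0:ℝ) T, f t ≤ C₀ * Real.exp (-γ * T) := by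
      intro t ht
      have h1 : min C₀ (A * Real.exp (-lam * t)) ≤ C₀ := min_le_left _ _
      have h2 : Real.exp (-γ * t) ≤ Real.exp (-γ * T) := by
        apply Real.exp_le_exp.2
        nlinarith [ht.2]
      calc f t ≤ Real.exp (-γ * t) * C₀ := mul_le_mul_of_nonneg_left h1 (Real.exp_nonneg _)
        _ ≤ Real.exp (-γ * T) * C₀ := mul_le_mul_of_nonneg_right h2 hC₀.le
        _ = C₀ * Real.exp (-γ * T) := mul_comm _ _
    have hle := setIntegral_mono_on hfint1 (integrableOn_const measure_Ioc_lt_top.ne)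
      measurableSet_Ioc hmono
    rw [setIntegral_const, Real.volume_real_Ioc_of_le hT, smul_eq_mul] at hle
    calc (∫ t in Set.Ioc (0:ℝ) T, f t) ≤ (T - 0) * (C₀ * Real.exp (-γ * T)) := hle
      _ = C₀ * Real.exp (-γ * T) * T := by ring
  have hI2 : ∫ t in Set.Ioi T, f t ≤ C₀ * Real.exp (-γ * T) * (1 / (lam + γ)) := by
    have hmono : ∀ t ∈ Set.Ioi T, f t ≤ A * Real.exp (-(lam + γ) * t) := fun t _ => hbound t
    have hInt2 : IntegrableOn (fun t => A * Real.exp (-(lam + γ) * t)) (Set.Ioi T) :=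
      (exp_neg_integrableOn_Ioi T hlg).const_mul A
    have h1 := setIntegral_mono_on hfint2 hInt2 measurableSet_Ioi hmono
    have h2 : (∫ t in Set.Ioi T, A * Real.exp (-(lam + γ) * t))
        = A * (Real.exp (-(lam + γ) * T) / (lam + γ)) := by
      rw [integral_const_mul, exp_int_Ioi _ _ hlg]
    have h3 : A * (Real.exp (-(lam + γ) * T) / (lam + γ))
        ≤ C₀ * Real.exp (-γ * T) * (1 / (lam + γ)) := by
      have e1 : Real.exp (-(lam + γ) * T) = Real.exp (-lam * T) * Real.exp (-γ * T) := by
        rw [show -(lam + γ) * T = -lam * T + -γ * T by ring, Real.exp_add]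
      have hmul : A * Real.exp (-lam * T) * Real.exp (-γ * T) ≤ C₀ * Real.exp (-γ * T) :=
        mul_le_mul_of_nonneg_right hAT (Real.exp_nonneg _)
      rw [e1]
      calc A * (Real.exp (-lam*T) * Real.exp (-γ*T) / (lam+γ))
            = (A * Real.exp (-lam*T) * Real.exp (-γ*T)) * (1/(lam+γ)) := by ring
        _ ≤ (C₀ * Real.exp (-γ*T)) * (1/(lam+γ)) := by
            apply mul_le_mul_of_nonneg_right hmul
            positivity
    calc (∫ t in Set.Ioi T, f t) ≤ ∫ t in Set.Ioi T, A * Real.exp (-(lam + γ) * t) := h1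
      _ = A * (Real.exp (-(lam + γ) * T) / (lam + γ)) := h2
      _ ≤ C₀ * Real.exp (-γ * T) * (1 / (lam + γ)) := h3
  have hfinal : C₀ * Real.exp (-γ * T) * (T + 1/(lam+γ))
      = C₀ * Real.exp (-γ * T) * T + C₀ * Real.exp (-γ * T) * (1/(lam+γ)) := by ring
  rw [heq] at *
  linarith

/-- Combined estimate: for `g(t) = min(C₀, C h^{-n/2} e^{-λt})`, `γ ≤ 0` with
`λ + γ > 0`, and crossover time `t* = max(0, (1/λ)log(C h^{-n/2}/C₀))`, one has
`∫₀^∞ e^{-γt} g(t) dt ≤ C₀ e^{-γ t*}(t* + 1/(λ+γ))`; consequently, for `h`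
small, `∫₀^∞ e^{-γt} g(t) dt ≤ C' h^{(n/(2λ))γ} log(1/h)`. -/
theorem stmt_8 (n : ℕ) (hn : 1 ≤ n) (C₀ C lam γ : ℝ)
    (hC₀ : 0 < C₀) (hC : 0 < C) (hlam : 0 < lam) (hγ : γ ≤ 0) (hlg : 0 < lam + γ) :
    (∀ h ∈ Set.Ioo (0 : ℝ) 1,
      ∫ t in Set.Ioi (0 : ℝ),
          Real.exp (-γ * t) * min C₀ (C * h ^ (-(n : ℝ) / 2) * Real.exp (-lam * t)) ≤
        C₀ * Real.exp (-γ * max 0 ((1 / lam) * Real.log (C * h ^ (-(n : ℝ) / 2) / C₀))) *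
          (max 0 ((1 / lam) * Real.log (C * h ^ (-(n : ℝ) / 2) / C₀)) + 1 / (lam + γ))) ∧
    ∃ C' > 0, ∃ h₀ ∈ Set.Ioo (0 : ℝ) 1, ∀ h ∈ Set.Ioo (0 : ℝ) h₀,
      ∫ t in Set.Ioi (0 : ℝ),
          Real.exp (-γ * t) * min C₀ (C * h ^ (-(n : ℝ) / 2) * Real.exp (-lam * t)) ≤
        C' * h ^ (((n : ℝ) / (2 * lam)) * γ) * Real.log (1 / h) := by
  have main : ∀ h ∈ Set.Ioo (0 : ℝ) 1,
      ∫ t in Set.Ioi (0 : ℝ),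
          Real.exp (-γ * t) * min C₀ (C * h ^ (-(n : ℝ) / 2) * Real.exp (-lam * t)) ≤
        C₀ * Real.exp (-γ * max 0 ((1 / lam) * Real.log (C * h ^ (-(n : ℝ) / 2) / C₀))) *
          (max 0 ((1 / lam) * Real.log (C * h ^ (-(n : ℝ) / 2) / C₀)) + 1 / (lam + γ)) := by
    intro h hh
    set A := C * h ^ (-(n : ℝ) / 2) with hAdef
    have hA : 0 < A := mul_pos hC (Real.rpow_pos_of_pos hh.1 _)
    set T := max 0 ((1 / lam) * Real.log (A / C₀)) with hTdef
    have hT : 0 ≤ T := le_max_left _ _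
    have hAT : A * Real.exp (-lam * T) ≤ C₀ := by
      rcases le_or_gt (Real.log (A / C₀)) 0 with hl | hl
      · have hT0 : T = 0 := max_eq_left (by
          have h1 : (1 / lam) * Real.log (A / C₀) ≤ 0 :=
            mul_nonpos_of_nonneg_of_nonpos (by positivity) hl
          linarith)
        have hle1 : A / C₀ ≤ 1 := by
          have := Real.exp_le_exp.2 hl
          rwa [Real.exp_log (by positivity), Real.exp_zero] at this
        have : A ≤ C₀ := (div_le_one hC₀).1 hle1
        rw [hT0]
        simpa using this
      · have hT1 : T = (1 / lam) * Real.log (A / C₀) :=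
          max_eq_right (by positivity)
        have hml : -lam * T = -Real.log (A / C₀) := by
          rw [hT1]; field_simp
        have hid : A * (C₀ / A) = C₀ := by field_simp
        rw [hml, Real.exp_neg, Real.exp_log (by positivity), inv_div, hid]
    exact key_bound C₀ A lam γ T hC₀ hA hγ hlg hT hAT
  refine ⟨main, ?_⟩
  set P := (C / C₀) ^ (-γ / lam) with hPdef
  have hP : 0 < P := Real.rpow_pos_of_pos (div_pos hC hC₀) _
  set K := (|Real.log (C / C₀)| + (n : ℝ) / 2) / lam + 1 / (lam + γ) with hKdef
  have hnpos : (0 : ℝ) < n := by exact_mod_cast hn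
  have hK : 0 < K :=
    add_pos_of_nonneg_of_pos (div_nonneg (by positivity) hlam.le) (one_div_pos.2 hlg)
  have hm : (0 : ℝ) < min 1 (C / C₀) := lt_min one_pos (div_pos hC hC₀)
  refine ⟨C₀ * P * K, by positivity,
    min (Real.exp (-1)) ((min 1 (C / C₀)) ^ (2 / (n : ℝ))), ?_, ?_⟩
  · constructor
    · apply lt_min (Real.exp_pos _)
      exact Real.rpow_pos_of_pos hm _
    · calc min (Real.exp (-1)) ((min 1 (C / C₀)) ^ (2 / (n : ℝ)))
          ≤ Real.exp (-1) := min_le_left _ _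
        _ < 1 := Real.exp_lt_one_iff.2 (by norm_num)
  · intro h hh
    obtain ⟨hh1, hh2⟩ := hh
    have hhe : h < Real.exp (-1) := lt_of_lt_of_le hh2 (min_le_left _ _)
    have hh3 : h < 1 := hhe.trans (Real.exp_lt_one_iff.2 (by norm_num))
    set L := Real.log (1 / h) with hLdef
    have hLh : L = -Real.log h := by rw [hLdef, one_div, Real.log_inv]
    have hL1 : 1 ≤ L := by
      have := Real.log_lt_log hh1 hhe
      rw [Real.log_exp] at this
      linarith [hLh]
    -- h^(n/2) < min 1 (C/C₀)
    have hpow : h ^ ((n : ℝ) / 2) < min 1 (C / C₀) := by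
      have hlt : h < (min 1 (C / C₀)) ^ (2 / (n : ℝ)) := lt_of_lt_of_le hh2 (min_le_right _ _)
      have hr := Real.rpow_lt_rpow hh1.le hlt (by positivity : (0 : ℝ) < (n : ℝ) / 2)
      rw [← Real.rpow_mul hm.le] at hr
      rw [show 2 / (n : ℝ) * ((n : ℝ) / 2) = 1 by field_simp, Real.rpow_one] at hr
      exact hr
    have hx : 0 < h ^ ((n : ℝ) / 2) := Real.rpow_pos_of_pos hh1 _
    set A := C * h ^ (-(n : ℝ) / 2) with hAdef
    have hA : 0 < A := mul_pos hC (Real.rpow_pos_of_pos hh1 _)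
    have hAinv : h ^ (-(n : ℝ) / 2) = (h ^ ((n : ℝ) / 2))⁻¹ := by
      rw [show -(n : ℝ) / 2 = -((n : ℝ) / 2) by ring, Real.rpow_neg hh1.le]
    have hAC : C₀ < A := by
      have h1 : h ^ ((n : ℝ) / 2) < C / C₀ := hpow.trans_le (min_le_right _ _)
      have h2 : C₀ < C / h ^ ((n : ℝ) / 2) := by
        rw [lt_div_iff₀ hx]
        calc C₀ * h ^ ((n : ℝ) / 2) < C₀ * (C / C₀) := by
              exact (mul_lt_mul_iff_right₀ hC₀).2 h1
          _ = C := by field_simp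
      rw [hAdef, hAinv, ← div_eq_mul_inv]
      exact h2
    have hlogA : 0 < Real.log (A / C₀) := Real.log_pos ((one_lt_div hC₀).2 hAC)
    set T := max 0 ((1 / lam) * Real.log (A / C₀)) with hTdef
    have hT1 : T = (1 / lam) * Real.log (A / C₀) := max_eq_right (by positivity)
    -- log decomposition
    have hsplitA : A / C₀ = (C / C₀) * h ^ (-(n : ℝ) / 2) := by rw [hAdef]; ring
    have hlog2 : Real.log (A / C₀) = Real.log (C / C₀) + ((n : ℝ) / 2) * L := by
      rw [hsplitA, Real.log_mul (ne_of_gt (div_pos hC hC₀))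
        (ne_of_gt (Real.rpow_pos_of_pos hh1 _)), Real.log_rpow hh1, hLh]
      ring
    -- exponential identity
    have hexp : Real.exp (-γ * T) = P * h ^ (((n : ℝ) / (2 * lam)) * γ) := by
      have e1 : -γ * T = Real.log (A / C₀) * (-γ / lam) := by rw [hT1]; ring
      rw [e1, ← Real.rpow_def_of_pos (by positivity : (0:ℝ) < A / C₀)]
      rw [hsplitA, Real.mul_rpow (div_pos hC hC₀).le (Real.rpow_pos_of_pos hh1 _).le]
      rw [← Real.rpow_mul hh1.le,
        show -(n : ℝ) / 2 * (-γ / lam) = (n : ℝ) / (2 * lam) * γ by ring]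
    have hTK : T + 1 / (lam + γ) ≤ K * L := by
      have hc1 : Real.log (C / C₀) ≤ |Real.log (C / C₀)| := le_abs_self _
      have hc2 : 0 ≤ |Real.log (C / C₀)| := abs_nonneg _
      have hTle : T ≤ (|Real.log (C / C₀)| + (n : ℝ) / 2) / lam * L := by
        rw [hT1, hlog2]
        have hinner : Real.log (C / C₀) + (n : ℝ) / 2 * L
            ≤ (|Real.log (C / C₀)| + (n : ℝ) / 2) * L := by nlinarith
        calc (1 / lam) * (Real.log (C / C₀) + (n : ℝ) / 2 * L)
            ≤ (1 / lam) * ((|Real.log (C / C₀)| + (n : ℝ) / 2) * L) :=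
              mul_le_mul_of_nonneg_left hinner (by positivity)
          _ = (|Real.log (C / C₀)| + (n : ℝ) / 2) / lam * L := by ring
      have hgl : 1 / (lam + γ) ≤ 1 / (lam + γ) * L :=
        le_mul_of_one_le_right (one_div_pos.2 hlg).le hL1
      have hKL : K * L = (|Real.log (C / C₀)| + (n : ℝ) / 2) / lam * L
          + 1 / (lam + γ) * L := by rw [hKdef]; ring
      linarith
    have hfin := main h ⟨hh1, hh3⟩
    calc ∫ t in Set.Ioi (0:ℝ),
          Real.exp (-γ * t) * min C₀ (C * h ^ (-(n : ℝ) / 2) * Real.exp (-lam * t))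
        ≤ C₀ * Real.exp (-γ * T) * (T + 1 / (lam + γ)) := hfin
      _ = C₀ * (P * h ^ (((n : ℝ) / (2 * lam)) * γ)) * (T + 1 / (lam + γ)) := by rw [hexp]
      _ ≤ C₀ * (P * h ^ (((n : ℝ) / (2 * lam)) * γ)) * (K * L) := by
          apply mul_le_mul_of_nonneg_left hTK
          positivity
      _ = C₀ * P * K * h ^ (((n : ℝ) / (2 * lam)) * γ) * L := by ring
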